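/- Let X be a real Banach space and fix constants 0 < α < 1 and β > 0. Then there exists a constant C > 0, depending only on α and β, with the following property: for every λ > 0, if for every n ∈ ℕ and every bounded linear map u : ℓ²_n → X one has a_{[αn]}(u) ≤ λ·[αn]^{−β}·π₂(u*) whenever [αn] ≥ 1 (where [·] denotes the integer part and u* : X* → ℓ²_n is the adjoint), then sup_{k≥1} k^β·a_k(u) ≤ λ·C·π₂(u*) for every n ∈ ℕ and every bounded linear map u : ℓ²_n → X. -/

import Mathlib

open MeasureTheory ProbabilityTheory NormedSpace

noncomputable section

/-- The `k`-th approximation number of a continuous linear map: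
`a_k(T) = inf {‖T - S‖ : rank S < k}`. -/
def apxNum {X Y : Type*} [SeminormedAddCommGroup X] [NormedSpace ℝ X]
    [SeminormedAddCommGroup Y] [NormedSpace ℝ Y] (k : ℕ) (T : X →L[ℝ] Y) : ℝ :=
  sInf {c : ℝ | ∃ S : X →L[ℝ] Y, LinearMap.rank (S : X →ₗ[ℝ] Y) < (k : Cardinal) ∧ c = ‖T - S‖}

/-- The standard Gaussian measure on `ℝⁿ`. -/
def gaussN (n : ℕ) : Measure (Fin n → ℝ) := Measure.pi fun _ => gaussianReal 0 1

/-- The ℓ-norm of `u : ℓ²ₙ → X`: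
`ℓ(u) = (∫ ‖∑ tₖ u(eₖ)‖² dγₙ(t))^{1/2}`. -/
def ellNorm {X : Type*} [SeminormedAddCommGroup X] [NormedSpace ℝ X] {n : ℕ}
    (u : EuclideanSpace ℝ (Fin n) →L[ℝ] X) : ℝ :=
  (∫ t, ‖∑ k, t k • u (EuclideanSpace.single k 1)‖ ^ 2 ∂(gaussN n)) ^ (1 / 2 : ℝ)

/-- The trace-dual norm of the ℓ-norm:
`ℓ*(v) = sup {|tr(v ∘ u)| : ℓ(u) ≤ 1}`. -/
def ellStar {X : Type*} [SeminormedAddCommGroup X] [NormedSpace ℝ X] {n : ℕ}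
    (v : X →L[ℝ] EuclideanSpace ℝ (Fin n)) : ℝ :=
  sSup {c : ℝ | ∃ u : EuclideanSpace ℝ (Fin n) →L[ℝ] X, ellNorm u ≤ 1 ∧
    c = |LinearMap.trace ℝ (EuclideanSpace ℝ (Fin n)) ((v.comp u) : _ →ₗ[ℝ] _)|}

/-- The weak-ℓ² norm of a finite family in `X`:
`sup {(∑ ξ(xᵢ)²)^{1/2} : ξ ∈ X*, ‖ξ‖ ≤ 1}`. -/
def weakl2 {X : Type*} [SeminormedAddCommGroup X] [NormedSpace ℝ X] {m : ℕ} (x : Fin m → X) : ℝ :=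
  sSup {c : ℝ | ∃ ξ : X →L[ℝ] ℝ, ‖ξ‖ ≤ 1 ∧ c = (∑ i, ξ (x i) ^ 2) ^ (1 / 2 : ℝ)}

/-- The 2-summing norm `π₂(T)` of a continuous linear map. -/
def pi2 {X Y : Type*} [SeminormedAddCommGroup X] [NormedSpace ℝ X]
    [SeminormedAddCommGroup Y] [NormedSpace ℝ Y] (T : X →L[ℝ] Y) : ℝ :=
  sInf {C : ℝ | 0 ≤ C ∧ ∀ (m : ℕ) (x : Fin m → X),
    (∑ i, ‖T (x i)‖ ^ 2) ^ (1 / 2 : ℝ) ≤ C * weakl2 x}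

/-- The Banach-space adjoint (dual map) `T* : Y* → X*`. -/
def dualCLM {X Y : Type*} [SeminormedAddCommGroup X] [NormedSpace ℝ X]
    [SeminormedAddCommGroup Y] [NormedSpace ℝ Y] (T : X →L[ℝ] Y) :
    StrongDual ℝ Y →L[ℝ] StrongDual ℝ X :=
  (ContinuousLinearMap.compL ℝ X Y ℝ).flip T

/-- The `k`-th Weyl number `x_k(T) = sup {a_k(T∘A) : A : ℓ₂ → X, ‖A‖ ≤ 1}`. -/
def weylNum {X Y : Type*} [SeminormedAddCommGroup X] [NormedSpace ℝ X]
    [SeminormedAddCommGroup Y] [NormedSpace ℝ Y] (k : ℕ) (T : X →L[ℝ] Y) : ℝ :=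
  sSup {c : ℝ | ∃ A : (lp (fun _ : ℕ => ℝ) 2) →L[ℝ] X, ‖A‖ ≤ 1 ∧ c = apxNum k (T.comp A)}

/-- The Banach–Mazur distance between two normed spaces. -/
def BMdist (X Y : Type*) [NormedAddCommGroup X] [NormedSpace ℝ X]
    [NormedAddCommGroup Y] [NormedSpace ℝ Y] : ℝ :=
  sInf {c : ℝ | ∃ w : X ≃L[ℝ] Y, c = ‖(w : X →L[ℝ] Y)‖ * ‖(w.symm : Y →L[ℝ] X)‖}

/-- The Hilbert–Schmidt norm of a map between finite-dimensional Euclidean spaces. -/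
def HSnorm {n m : ℕ} (A : EuclideanSpace ℝ (Fin n) →L[ℝ] EuclideanSpace ℝ (Fin m)) : ℝ :=
  (∑ k, ‖A (EuclideanSpace.single k 1)‖ ^ 2) ^ (1 / 2 : ℝ)

/-- `π₂*(u) = inf {‖A‖_HS ‖B‖ : u = B ∘ A}`, the trace dual of the 2-summing norm. -/
def pi2Star {X : Type*} [SeminormedAddCommGroup X] [NormedSpace ℝ X] {n : ℕ}
    (u : EuclideanSpace ℝ (Fin n) →L[ℝ] X) : ℝ :=
  sInf {c : ℝ | ∃ (m : ℕ) (A : EuclideanSpace ℝ (Fin n) →L[ℝ] EuclideanSpace ℝ (Fin m))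
    (B : EuclideanSpace ℝ (Fin m) →L[ℝ] X), u = B.comp A ∧ c = HSnorm A * ‖B‖}

/-- `γ₂(T)`: factorization norm through a Hilbert space `ℓ²(ι)`. -/
def gamma2 {X Y : Type*} [SeminormedAddCommGroup X] [NormedSpace ℝ X]
    [SeminormedAddCommGroup Y] [NormedSpace ℝ Y] (T : X →L[ℝ] Y) : ℝ :=
  sInf {c : ℝ | ∃ (ι : Type) (A : X →L[ℝ] lp (fun _ : ι => ℝ) 2)
    (B : (lp (fun _ : ι => ℝ) 2) →L[ℝ] Y), T = B.comp A ∧ c = ‖B‖ * ‖A‖}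

/-- `X` has weak cotype 2 with constant `C`. -/
def WeakCotype2With (X : Type*) [NormedAddCommGroup X] [NormedSpace ℝ X] (C : ℝ) : Prop :=
  ∀ (n : ℕ) (u : EuclideanSpace ℝ (Fin n) →L[ℝ] X) (k : ℕ), 1 ≤ k →
    Real.sqrt k * apxNum k u ≤ C * ellNorm u

/-- `X` has weak cotype 2. -/
def WeakCotype2 (X : Type*) [NormedAddCommGroup X] [NormedSpace ℝ X] : Prop :=
  ∃ C : ℝ, 0 < C ∧ WeakCotype2With X C

/-- `X` has weak type 2 with constant `C`. -/
def WeakType2With (X : Type*) [NormedAddCommGroup X] [NormedSpace ℝ X] (C : ℝ) : Prop :=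
  ∀ (n : ℕ) (v : X →L[ℝ] EuclideanSpace ℝ (Fin n)) (k : ℕ), 1 ≤ k →
    Real.sqrt k * apxNum k v ≤ C * ellStar v

/-- `X` has weak type 2. -/
def WeakType2 (X : Type*) [NormedAddCommGroup X] [NormedSpace ℝ X] : Prop :=
  ∃ C : ℝ, 0 < C ∧ WeakType2With X C

/-- The weak cotype 2 constant of `X`. -/
def wC2 (X : Type*) [NormedAddCommGroup X] [NormedSpace ℝ X] : ℝ :=
  sInf {C : ℝ | 0 ≤ C ∧ WeakCotype2With X C}

/-- The weak type 2 constant of `X`. -/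
def wT2 (X : Type*) [NormedAddCommGroup X] [NormedSpace ℝ X] : ℝ :=
  sInf {C : ℝ | 0 ≤ C ∧ WeakType2With X C}

/-- The `k`-th Gaussian coefficient of `f : ℝⁿ → X`: `∫ gₖ(s) f(s) dγₙ(s)`. -/
def gaussCoeff {X : Type*} [NormedAddCommGroup X] [NormedSpace ℝ X] {n : ℕ}
    (f : (Fin n → ℝ) → X) (k : Fin n) : X :=
  ∫ s, s k • f s ∂(gaussN n)

/-- The Gaussian projection `Qₙ` is bounded by `C` on `L²(γₙ; X)` for every `n`. -/
def KConvexWith (X : Type*) [NormedAddCommGroup X] [NormedSpace ℝ X] (C : ℝ) : Prop :=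
  ∀ (n : ℕ) (f : (Fin n → ℝ) → X), MemLp f 2 (gaussN n) →
    (∫ t, ‖∑ k, t k • gaussCoeff f k‖ ^ 2 ∂(gaussN n)) ^ (1 / 2 : ℝ) ≤
      C * (∫ t, ‖f t‖ ^ 2 ∂(gaussN n)) ^ (1 / 2 : ℝ)

/-- `X` is K-convex. -/
def KConvex (X : Type*) [NormedAddCommGroup X] [NormedSpace ℝ X] : Prop :=
  ∃ C : ℝ, 0 < C ∧ KConvexWith X C

/-- The K-convexity constant of `X`. -/
def Kconst (X : Type*) [NormedAddCommGroup X] [NormedSpace ℝ X] : ℝ :=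
  sInf {C : ℝ | 0 ≤ C ∧ KConvexWith X C}



section AuxLemmas

variable {E F : Type} [NormedAddCommGroup E] [NormedSpace ℝ E]
  [NormedAddCommGroup F] [NormedSpace ℝ F]
  {X : Type} [NormedAddCommGroup X] [NormedSpace ℝ X]

private def apxSet (k : ℕ) (T : E →L[ℝ] X) : Set ℝ :=
  {c : ℝ | ∃ S : E →L[ℝ] X, LinearMap.rank (S : E →ₗ[ℝ] X) < (k : Cardinal) ∧ c = ‖T - S‖}

private lemma apxNum_def (k : ℕ) (T : E →L[ℝ] X) : apxNum k T = sInf (apxSet k T) := rfl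

private lemma rank_zero_lt {k : ℕ} (hk : 1 ≤ k) :
    LinearMap.rank ((0 : E →L[ℝ] X) : E →ₗ[ℝ] X) < (k : Cardinal) := by
  have h0 : ((0 : E →L[ℝ] X) : E →ₗ[ℝ] X) = 0 := rfl
  rw [h0, LinearMap.rank_zero]
  exact_mod_cast hk

private lemma apxSet_nonempty {k : ℕ} (hk : 1 ≤ k) (T : E →L[ℝ] X) : (apxSet k T).Nonempty := by
  refine ⟨‖T - 0‖, 0, ?_, rfl⟩
  have h0 : ((0 : E →L[ℝ] X) : E →ₗ[ℝ] X) = 0 := rfl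
  rw [h0, LinearMap.rank_zero]
  exact_mod_cast hk

private lemma apxSet_bddBelow (k : ℕ) (T : E →L[ℝ] X) : BddBelow (apxSet k T) :=
  ⟨0, by rintro c ⟨S, -, rfl⟩; exact norm_nonneg _⟩

private lemma apxNum_nonneg (k : ℕ) (T : E →L[ℝ] X) : 0 ≤ apxNum k T :=
  Real.sInf_nonneg (by rintro c ⟨S, -, rfl⟩; exact norm_nonneg _)

private lemma apxNum_le (k : ℕ) (T S : E →L[ℝ] X)
    (hS : LinearMap.rank (S : E →ₗ[ℝ] X) < (k : Cardinal)) : apxNum k T ≤ ‖T - S‖ :=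
  csInf_le (apxSet_bddBelow k T) ⟨S, hS, rfl⟩

private lemma apxNum_anti {j k : ℕ} (hj : 1 ≤ j) (hjk : j ≤ k) (T : E →L[ℝ] X) :
    apxNum k T ≤ apxNum j T := by
  apply csInf_le_csInf (apxSet_bddBelow k T) (apxSet_nonempty hj T)
  rintro c ⟨S, hS, rfl⟩
  exact ⟨S, lt_of_lt_of_le hS (by exact_mod_cast hjk), rfl⟩

private lemma norm_le_apxNum_one (T : E →L[ℝ] X) : ‖T‖ ≤ apxNum 1 T := by
  apply le_csInf (apxSet_nonempty le_rfl T)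
  rintro c ⟨S, hS, rfl⟩
  have h1 : LinearMap.rank (S : E →ₗ[ℝ] X) = 0 :=
    Cardinal.lt_one_iff_zero.mp (by exact_mod_cast hS)
  have h2 : (S : E →ₗ[ℝ] X) = 0 := by
    rw [LinearMap.rank] at h1
    exact LinearMap.range_eq_bot.mp (Submodule.rank_eq_zero.mp h1)
  have hS0 : S = 0 := ContinuousLinearMap.coe_injective (by rw [h2]; rfl)
  simp [hS0]

private lemma apxNum_add_le {k : ℕ} (hk : 1 ≤ k) (A B : E →L[ℝ] X) :
    apxNum k (A + B) ≤ ‖A‖ + apxNum k B := by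
  have h : apxNum k (A + B) - ‖A‖ ≤ sInf (apxSet k B) := by
    apply le_csInf (apxSet_nonempty hk B)
    rintro c ⟨S, hS, rfl⟩
    have h1 : apxNum k (A + B) ≤ ‖A + B - S‖ := apxNum_le k _ S hS
    have h2 : ‖A + B - S‖ ≤ ‖A‖ + ‖B - S‖ := by
      rw [add_sub_assoc]; exact norm_add_le _ _
    linarith
  rw [apxNum_def k B]; linarith

private lemma apxNum_comp_le {k : ℕ} (hk : 1 ≤ k) (T : E →L[ℝ] X) (A : F →L[ℝ] E)
    (hA : ‖A‖ ≤ 1) : apxNum k (T.comp A) ≤ apxNum k T := by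
  apply le_csInf (apxSet_nonempty hk T)
  rintro c ⟨S, hS, rfl⟩
  have hr : LinearMap.rank ((S.comp A : F →L[ℝ] X) : F →ₗ[ℝ] X) < (k : Cardinal) := by
    have h0 : ((S.comp A : F →L[ℝ] X) : F →ₗ[ℝ] X)
        = (S : E →ₗ[ℝ] X).comp (A : F →ₗ[ℝ] E) := rfl
    rw [h0]
    exact lt_of_le_of_lt (LinearMap.rank_comp_le_left _ _) hS
  refine le_trans (apxNum_le k _ _ hr) ?_
  have h1 : T.comp A - S.comp A = (T - S).comp A := by ext x; simp
  rw [h1]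
  calc ‖(T - S).comp A‖ ≤ ‖T - S‖ * ‖A‖ := ContinuousLinearMap.opNorm_comp_le _ _
    _ ≤ ‖T - S‖ * 1 := mul_le_mul_of_nonneg_left hA (norm_nonneg _)
    _ = ‖T - S‖ := mul_one _

private lemma apxNum_eq_zero {n k : ℕ} (h : n < k) (u : EuclideanSpace ℝ (Fin n) →L[ℝ] X) :
    apxNum k u = 0 := by
  refine le_antisymm ?_ (apxNum_nonneg _ _)
  have hrk : Module.rank ℝ (EuclideanSpace ℝ (Fin n)) = (n : Cardinal) := by
    rw [← Module.finrank_eq_rank, finrank_euclideanSpace_fin]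
  have hr : LinearMap.rank (u : EuclideanSpace ℝ (Fin n) →ₗ[ℝ] X) < (k : Cardinal) := by
    refine lt_of_le_of_lt (rank_range_le (u : EuclideanSpace ℝ (Fin n) →ₗ[ℝ] X)) ?_
    rw [hrk]; exact_mod_cast h
  have := apxNum_le k u u hr
  simpa using this

end AuxLemmas

section AuxLemmas2

variable {E F : Type} [NormedAddCommGroup E] [NormedSpace ℝ E]
  [NormedAddCommGroup F] [NormedSpace ℝ F]
  {X : Type} [NormedAddCommGroup X] [NormedSpace ℝ X]

private def weakSet {m : ℕ} (x : Fin m → X) : Set ℝ :=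
  {c : ℝ | ∃ ξ : X →L[ℝ] ℝ, ‖ξ‖ ≤ 1 ∧ c = (∑ i, ξ (x i) ^ 2) ^ (1 / 2 : ℝ)}

private lemma weakSet_bddAbove {m : ℕ} (x : Fin m → X) : BddAbove (weakSet x) := by
  refine ⟨(∑ i, ‖x i‖ ^ 2) ^ (1 / 2 : ℝ), ?_⟩
  rintro c ⟨ξ, hξ, rfl⟩
  apply Real.rpow_le_rpow (Finset.sum_nonneg fun i _ => sq_nonneg _) ?_ (by norm_num)
  apply Finset.sum_le_sum; intro i _
  have h1 : |ξ (x i)| ≤ ‖x i‖ := by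
    calc |ξ (x i)| = ‖ξ (x i)‖ := rfl
      _ ≤ ‖ξ‖ * ‖x i‖ := ξ.le_opNorm _
      _ ≤ 1 * ‖x i‖ := mul_le_mul_of_nonneg_right hξ (norm_nonneg _)
      _ = ‖x i‖ := one_mul _
  calc ξ (x i) ^ 2 = |ξ (x i)| ^ 2 := (sq_abs _).symm
    _ ≤ ‖x i‖ ^ 2 := pow_le_pow_left₀ (abs_nonneg _) h1 2

private lemma le_weakl2 {m : ℕ} (x : Fin m → X) (ξ : X →L[ℝ] ℝ) (hξ : ‖ξ‖ ≤ 1) :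
    (∑ i, ξ (x i) ^ 2) ^ (1 / 2 : ℝ) ≤ weakl2 x :=
  le_csSup (weakSet_bddAbove x) ⟨ξ, hξ, rfl⟩

private lemma weakl2_nonneg {m : ℕ} (x : Fin m → X) : 0 ≤ weakl2 x := by
  have h := le_weakl2 x 0 (by simp)
  have h2 : ((∑ i : Fin m, ((0 : X →L[ℝ] ℝ) (x i)) ^ 2) : ℝ) ^ (1 / 2 : ℝ) = 0 := by
    norm_num
  rw [h2] at h; exact h

private def pi2SetD (T : E →L[ℝ] X) : Set ℝ :=
  {C : ℝ | 0 ≤ C ∧ ∀ (m : ℕ) (x : Fin m → E),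
    (∑ i, ‖T (x i)‖ ^ 2) ^ (1 / 2 : ℝ) ≤ C * weakl2 x}

private lemma pi2_def (T : E →L[ℝ] X) : pi2 T = sInf (pi2SetD T) := rfl

private lemma pi2SetD_bddBelow (T : E →L[ℝ] X) : BddBelow (pi2SetD T) :=
  ⟨0, fun _ hC => hC.1⟩

private lemma pi2_nonneg (T : E →L[ℝ] X) : 0 ≤ pi2 T :=
  Real.sInf_nonneg fun _ hC => hC.1

private lemma dualCLM_apply (T : E →L[ℝ] X) (ξ : StrongDual ℝ X) :
    dualCLM T ξ = ξ.comp T := rfl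

private lemma euclid_apply_sum {n : ℕ} (u : EuclideanSpace ℝ (Fin n) →L[ℝ] X)
    (t : EuclideanSpace ℝ (Fin n)) :
    u t = ∑ j, t j • u (EuclideanSpace.single j 1) := by
  have h : t = ∑ j, t j • EuclideanSpace.single j (1 : ℝ) := by
    ext i
    rw [WithLp.ofLp_sum, Finset.sum_apply]
    simp [EuclideanSpace.single_apply]
  conv_lhs => rw [h]
  rw [map_sum]
  simp only [ContinuousLinearMap.map_smul]

private lemma dual_comp_norm_le {n : ℕ} (u : EuclideanSpace ℝ (Fin n) →L[ℝ] X)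
    (ξ : StrongDual ℝ X) :
    ‖ξ.comp u‖ ≤ Real.sqrt (∑ j, (ξ (u (EuclideanSpace.single j 1))) ^ 2) := by
  apply ContinuousLinearMap.opNorm_le_bound _ (Real.sqrt_nonneg _)
  intro t
  have h1 : (ξ.comp u) t = ∑ j, t j * ξ (u (EuclideanSpace.single j 1)) := by
    rw [ContinuousLinearMap.comp_apply, euclid_apply_sum u t, map_sum]
    simp [smul_eq_mul]
  have h2 : ‖t‖ = Real.sqrt (∑ j, (t j) ^ 2) := by
    rw [EuclideanSpace.norm_eq]
    congr 1
    exact Finset.sum_congr rfl fun j _ => by rw [Real.norm_eq_abs, sq_abs]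
  rw [h1, h2, Real.norm_eq_abs]
  calc |∑ j, t j * ξ (u (EuclideanSpace.single j 1))|
      = Real.sqrt ((∑ j, t j * ξ (u (EuclideanSpace.single j 1))) ^ 2) :=
        (Real.sqrt_sq_eq_abs _).symm
    _ ≤ Real.sqrt ((∑ j, (t j) ^ 2) * (∑ j, (ξ (u (EuclideanSpace.single j 1))) ^ 2)) :=
        Real.sqrt_le_sqrt (Finset.sum_mul_sq_le_sq_mul_sq _ _ _)
    _ = Real.sqrt (∑ j, (ξ (u (EuclideanSpace.single j 1))) ^ 2) * Real.sqrt (∑ j, (t j) ^ 2) := by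
        rw [Real.sqrt_mul (Finset.sum_nonneg fun j _ => sq_nonneg _), mul_comm]

private lemma sum_sq_le_weakl2 {m : ℕ} (ξs : Fin m → StrongDual ℝ X) (y : X) :
    ∑ i, (ξs i y) ^ 2 ≤ ‖y‖ ^ 2 * (weakl2 ξs) ^ 2 := by
  rcases eq_or_ne y 0 with rfl | hy
  · simp
  · have hy' : 0 < ‖y‖ := norm_pos_iff.mpr hy
    set Ξ : StrongDual ℝ (StrongDual ℝ X) :=
      ‖y‖⁻¹ • (NormedSpace.inclusionInDoubleDual ℝ X y) with hΞ
    have hΞnorm : ‖Ξ‖ ≤ 1 := by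
      rw [hΞ]; refine (ContinuousLinearMap.opNorm_smul_le ‖y‖⁻¹ (NormedSpace.inclusionInDoubleDual ℝ X y)).trans ?_; rw [norm_inv, norm_norm]
      rw [inv_mul_le_iff₀ hy']
      simpa using NormedSpace.double_dual_bound ℝ X y
    have happ : ∀ ξ : StrongDual ℝ X, ξ y = ‖y‖ * Ξ ξ := by
      intro ξ
      rw [hΞ]
      simp only [ContinuousLinearMap.smul_apply, NormedSpace.dual_def, smul_eq_mul]
      field_simp
    have h1 : (∑ i, (Ξ (ξs i)) ^ 2) ^ (1 / 2 : ℝ) ≤ weakl2 ξs := le_weakl2 ξs Ξ hΞnorm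
    have hs : 0 ≤ ∑ i, (Ξ (ξs i)) ^ 2 := Finset.sum_nonneg fun _ _ => sq_nonneg _
    have h2 : ∑ i, (Ξ (ξs i)) ^ 2 ≤ (weakl2 ξs) ^ 2 := by
      rw [← Real.sqrt_eq_rpow] at h1
      nlinarith [Real.sq_sqrt hs, Real.sqrt_nonneg (∑ i, (Ξ (ξs i)) ^ 2)]
    calc ∑ i, (ξs i y) ^ 2 = ∑ i, (‖y‖ * Ξ (ξs i)) ^ 2 := by
          exact Finset.sum_congr rfl fun i _ => by rw [happ]
      _ = ‖y‖ ^ 2 * ∑ i, (Ξ (ξs i)) ^ 2 := by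
          rw [Finset.mul_sum]; exact Finset.sum_congr rfl fun i _ => by ring
      _ ≤ ‖y‖ ^ 2 * (weakl2 ξs) ^ 2 := mul_le_mul_of_nonneg_left h2 (sq_nonneg _)

private lemma pi2SetD_dual_nonempty {n : ℕ} (u : EuclideanSpace ℝ (Fin n) →L[ℝ] X) :
    (pi2SetD (dualCLM u)).Nonempty := by
  refine ⟨Real.sqrt (∑ j, ‖u (EuclideanSpace.single j 1)‖ ^ 2), Real.sqrt_nonneg _, ?_⟩
  intro m ξs
  have key : ∑ i, ‖(dualCLM u) (ξs i)‖ ^ 2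
      ≤ (∑ j, ‖u (EuclideanSpace.single j 1)‖ ^ 2) * (weakl2 ξs) ^ 2 := by
    have h1 : ∀ i, ‖(dualCLM u) (ξs i)‖ ^ 2
        ≤ ∑ j, ((ξs i) (u (EuclideanSpace.single j 1))) ^ 2 := by
      intro i
      have h := dual_comp_norm_le u (ξs i)
      rw [dualCLM_apply]
      have hs : (0:ℝ) ≤ ∑ j, ((ξs i) (u (EuclideanSpace.single j 1))) ^ 2 :=
        Finset.sum_nonneg fun _ _ => sq_nonneg _
      nlinarith [Real.sq_sqrt hs, norm_nonneg ((ξs i).comp u), Real.sqrt_nonneg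
        (∑ j, ((ξs i) (u (EuclideanSpace.single j 1))) ^ 2)]
    calc ∑ i, ‖(dualCLM u) (ξs i)‖ ^ 2
        ≤ ∑ i, ∑ j, ((ξs i) (u (EuclideanSpace.single j 1))) ^ 2 :=
          Finset.sum_le_sum fun i _ => h1 i
      _ = ∑ j, ∑ i, ((ξs i) (u (EuclideanSpace.single j 1))) ^ 2 := Finset.sum_comm
      _ ≤ ∑ j, ‖u (EuclideanSpace.single j 1)‖ ^ 2 * (weakl2 ξs) ^ 2 :=
          Finset.sum_le_sum fun j _ => sum_sq_le_weakl2 ξs _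
      _ = (∑ j, ‖u (EuclideanSpace.single j 1)‖ ^ 2) * (weakl2 ξs) ^ 2 :=
          (Finset.sum_mul _ _ _).symm
  rw [← Real.sqrt_eq_rpow]
  calc Real.sqrt (∑ i, ‖(dualCLM u) (ξs i)‖ ^ 2)
      ≤ Real.sqrt ((∑ j, ‖u (EuclideanSpace.single j 1)‖ ^ 2) * (weakl2 ξs) ^ 2) :=
        Real.sqrt_le_sqrt key
    _ = Real.sqrt (∑ j, ‖u (EuclideanSpace.single j 1)‖ ^ 2) * Real.sqrt ((weakl2 ξs) ^ 2) :=
        Real.sqrt_mul (Finset.sum_nonneg fun _ _ => sq_nonneg _) _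
    _ = Real.sqrt (∑ j, ‖u (EuclideanSpace.single j 1)‖ ^ 2) * weakl2 ξs := by
        rw [Real.sqrt_sq (weakl2_nonneg ξs)]

private lemma pi2_dual_comp_le {n : ℕ} (u : EuclideanSpace ℝ (Fin n) →L[ℝ] X)
    (J : F →L[ℝ] EuclideanSpace ℝ (Fin n)) (hJ : ∀ x, ‖J x‖ ≤ ‖x‖) :
    pi2 (dualCLM (u.comp J)) ≤ pi2 (dualCLM u) := by
  rw [pi2_def, pi2_def]
  apply csInf_le_csInf (pi2SetD_bddBelow _) (pi2SetD_dual_nonempty u)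
  rintro C ⟨hC0, hC⟩
  refine ⟨hC0, fun m ξs => ?_⟩
  refine le_trans ?_ (hC m ξs)
  apply Real.rpow_le_rpow (Finset.sum_nonneg fun _ _ => sq_nonneg _) ?_ (by norm_num)
  apply Finset.sum_le_sum; intro i _
  have hle : ‖dualCLM (u.comp J) (ξs i)‖ ≤ ‖dualCLM u (ξs i)‖ := by
    rw [dualCLM_apply, dualCLM_apply]
    have he : (ξs i).comp (u.comp J) = ((ξs i).comp u).comp J := by ext x; simp
    rw [he]
    apply ContinuousLinearMap.opNorm_le_bound _ (norm_nonneg _)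
    intro x
    calc ‖(((ξs i).comp u).comp J) x‖ = ‖((ξs i).comp u) (J x)‖ := rfl
      _ ≤ ‖(ξs i).comp u‖ * ‖J x‖ := ContinuousLinearMap.le_opNorm _ _
      _ ≤ ‖(ξs i).comp u‖ * ‖x‖ := mul_le_mul_of_nonneg_left (hJ x) (norm_nonneg _)
  exact pow_le_pow_left₀ (norm_nonneg _) hle 2

end AuxLemmas2

section AuxLemmas3

private def restrLM {n N : ℕ} (h : n ≤ N) :
    EuclideanSpace ℝ (Fin N) →ₗ[ℝ] EuclideanSpace ℝ (Fin n) where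
  toFun t := WithLp.toLp 2 (fun i => t (Fin.castLE h i))
  map_add' a b := rfl
  map_smul' c a := rfl

private def restrCLM {n N : ℕ} (h : n ≤ N) :
    EuclideanSpace ℝ (Fin N) →L[ℝ] EuclideanSpace ℝ (Fin n) :=
  LinearMap.toContinuousLinearMap (restrLM h)

private lemma restrCLM_apply {n N : ℕ} (h : n ≤ N) (t : EuclideanSpace ℝ (Fin N)) (i : Fin n) :
    restrCLM h t i = t (Fin.castLE h i) := rfl

private def inclLM {n N : ℕ} (h : n ≤ N) :
    EuclideanSpace ℝ (Fin n) →ₗ[ℝ] EuclideanSpace ℝ (Fin N) where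
  toFun t := WithLp.toLp 2 (fun j : Fin N => if hj : (j : ℕ) < n then t ⟨j, hj⟩ else 0)
  map_add' a b := by ext j; by_cases hj : (j : ℕ) < n <;> simp [hj]
  map_smul' c a := by ext j; by_cases hj : (j : ℕ) < n <;> simp [hj]

private def inclCLM {n N : ℕ} (h : n ≤ N) :
    EuclideanSpace ℝ (Fin n) →L[ℝ] EuclideanSpace ℝ (Fin N) :=
  LinearMap.toContinuousLinearMap (inclLM h)

private lemma inclCLM_apply {n N : ℕ} (h : n ≤ N) (t : EuclideanSpace ℝ (Fin n)) (j : Fin N) :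
    inclCLM h t j = if hj : (j : ℕ) < n then t ⟨j, hj⟩ else 0 := rfl

private lemma restr_incl {n N : ℕ} (h : n ≤ N) (t : EuclideanSpace ℝ (Fin n)) :
    restrCLM h (inclCLM h t) = t := by
  ext i
  rw [restrCLM_apply, inclCLM_apply, dif_pos (show ((Fin.castLE h i : Fin N) : ℕ) < n from i.2)]
  rfl

private lemma restrCLM_norm_pt {n N : ℕ} (h : n ≤ N) (t : EuclideanSpace ℝ (Fin N)) :
    ‖restrCLM h t‖ ≤ ‖t‖ := by
  rw [EuclideanSpace.norm_eq, EuclideanSpace.norm_eq]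
  apply Real.sqrt_le_sqrt
  calc ∑ i : Fin n, ‖restrCLM h t i‖ ^ 2
      = ∑ i : Fin n, ‖t (Fin.castLE h i)‖ ^ 2 := rfl
    _ = ∑ j ∈ Finset.univ.map (Fin.castLEEmb h), ‖t j‖ ^ 2 := by
        rw [Finset.sum_map]; rfl
    _ ≤ ∑ j : Fin N, ‖t j‖ ^ 2 :=
        Finset.sum_le_sum_of_subset_of_nonneg (Finset.subset_univ _)
          (fun j _ _ => sq_nonneg _)

private lemma inclCLM_norm_pt {n N : ℕ} (h : n ≤ N) (t : EuclideanSpace ℝ (Fin n)) :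
    ‖inclCLM h t‖ ≤ ‖t‖ := by
  rw [EuclideanSpace.norm_eq, EuclideanSpace.norm_eq]
  apply Real.sqrt_le_sqrt
  have e1 : ∑ j : Fin N, ‖inclCLM h t j‖ ^ 2
      = ∑ j ∈ Finset.univ.map (Fin.castLEEmb h), ‖inclCLM h t j‖ ^ 2 := by
    symm
    apply Finset.sum_subset (Finset.subset_univ _)
    intro j _ hj
    have hjn : ¬ ((j : ℕ) < n) := by
      intro hc
      apply hj
      rw [Finset.mem_map]
      exact ⟨⟨(j : ℕ), hc⟩, Finset.mem_univ _, by ext; simp⟩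
    rw [inclCLM_apply, dif_neg hjn]
    simp
  rw [e1, Finset.sum_map]
  apply le_of_eq
  apply Finset.sum_congr rfl
  intro i _
  have : inclCLM h t (Fin.castLEEmb h i) = t i := by
    rw [show (Fin.castLEEmb h i) = Fin.castLE h i from rfl, inclCLM_apply,
      dif_pos (show ((Fin.castLE h i : Fin N) : ℕ) < n from i.2)]
    rfl
  rw [this]

end AuxLemmas3

private lemma arith_two_sub_le {y : ℝ} (hy0 : 0 < y) (hy1 : y < 1) : 2 - y ≤ 1 / y := by
  rw [le_div_iff₀ hy0]
  nlinarith [sq_nonneg (1 - y)]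

private lemma arith_key1 {y x x' d : ℝ} (hy1 : y < 1) (h1y : 0 < 1 - y) (hx0 : 0 ≤ x)
    (hxx' : x * (2 - y) ≤ x') :
    x + (d + (2 - x') / (1 - y)) ≤ d + (2 - x) / (1 - y) := by
  have e2 : x ≤ (x' - x) / (1 - y) := by
    rw [le_div_iff₀ h1y]; nlinarith
  have e3 : (2 - x) / (1 - y) = (2 - x') / (1 - y) + (x' - x) / (1 - y) := by
    rw [← add_div]; ring_nf
  linarith

private lemma arith_key2 {y x d : ℝ} (hy0 : 0 < y) (h1y : 0 < 1 - y) (hx0 : 0 ≤ x)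
    (hx1 : x ≤ 1) : x + (d + 0) ≤ d + (2 - x) / (1 - y) := by
  have h1 : x ≤ (2 - x) / (1 - y) := by
    rw [le_div_iff₀ h1y]; nlinarith
  linarith

set_option maxHeartbeats 4000000 in
private lemma key_ind {X : Type} [NormedAddCommGroup X] [NormedSpace ℝ X]
    {α β lam : ℝ} (hα0 : 0 < α) (hα1 : α < 1) (hβ : 0 < β) (hlam : 0 < lam)
    (H : ∀ (n : ℕ) (u : EuclideanSpace ℝ (Fin n) →L[ℝ] X), 1 ≤ ⌊α * (n : ℝ)⌋₊ →
      apxNum ⌊α * (n : ℝ)⌋₊ u ≤ lam * (⌊α * (n : ℝ)⌋₊ : ℝ) ^ (-β) * pi2 (dualCLM u))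
    (n : ℕ) :
    ∀ (u : EuclideanSpace ℝ (Fin n) →L[ℝ] X) (k : ℕ), 1 ≤ k →
      (k : ℝ) ^ β * apxNum k u ≤
        lam * (((2 / α) ^ β + (1 / α) ^ β) +
          (if k < ⌊α * (n : ℝ)⌋₊ then
            (2 - ((k : ℝ) / (⌊α * (n : ℝ)⌋₊ : ℝ)) ^ β) / (1 - α ^ β) else 0))
          * pi2 (dualCLM u) := by
  induction n using Nat.strong_induction_on with
  | _ n IH =>
  intro u k hk
  have hy0 : 0 < α ^ β := Real.rpow_pos_of_pos hα0 β
  have hy1 : α ^ β < 1 := Real.rpow_lt_one hα0.le hα1 hβ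
  have h1y : 0 < 1 - α ^ β := by linarith
  have hπ0 : 0 ≤ pi2 (dualCLM u) := pi2_nonneg _
  have hD0 : (0:ℝ) ≤ (2 / α) ^ β + (1 / α) ^ β := by positivity
  have hkR : (0:ℝ) < (k : ℝ) := by exact_mod_cast hk
  have hkβ : (0:ℝ) < (k : ℝ) ^ β := Real.rpow_pos_of_pos hkR β
  by_cases hkn : n < k
  · -- Branch 1 : k exceeds the dimension, approximation number vanishes
    rw [apxNum_eq_zero hkn u, mul_zero]
    have hbn : ⌊α * (n : ℝ)⌋₊ ≤ n := by
      have h1 : (⌊α * (n : ℝ)⌋₊ : ℝ) ≤ α * n := Nat.floor_le (by positivity)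
      have h2 : α * (n : ℝ) ≤ (n : ℝ) := by nlinarith [Nat.cast_nonneg (α := ℝ) n]
      exact_mod_cast le_trans h1 h2
    rw [if_neg (by omega)]
    have : (0:ℝ) ≤ lam * ((2 / α) ^ β + (1 / α) ^ β + 0) :=
      mul_nonneg hlam.le (by linarith)
    exact mul_nonneg this hπ0
  push_neg at hkn
  by_cases hb0 : ⌊α * (n : ℝ)⌋₊ = 0
  · -- Branch 2 : trivial floor; extend u to a bigger Euclidean space
    have hfl : α * (n : ℝ) < 1 := by
      have := Nat.lt_floor_add_one (α * (n : ℝ))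
      rw [hb0] at this; simpa using this
    set N := ⌈(1 / α : ℝ)⌉₊ with hN
    have hiN : (1 / α : ℝ) ≤ (N : ℝ) := Nat.le_ceil _
    have hNlt : (N : ℝ) < 1 / α + 1 := Nat.ceil_lt_add_one (by positivity)
    have hfloorN : ⌊α * (N : ℝ)⌋₊ = 1 := by
      rw [Nat.floor_eq_iff (by positivity)]
      constructor
      · have : α * (1 / α) ≤ α * (N : ℝ) := mul_le_mul_of_nonneg_left hiN hα0.le
        rw [mul_one_div, div_self (ne_of_gt hα0)] at this
        simpa using this
      · have : α * (N : ℝ) < α * (1 / α + 1) := mul_lt_mul_of_pos_left hNlt hα0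
        rw [mul_add, mul_one_div, div_self (ne_of_gt hα0)] at this
        norm_num
        linarith
    have hnN : n ≤ N := by
      have h2 : (n : ℝ) < 1 / α := by
        rw [lt_div_iff₀ hα0]; linarith [mul_comm α (n : ℝ)]
      have : (n : ℝ) < (N : ℝ) := lt_of_lt_of_le h2 hiN
      exact_mod_cast this.le
    set u' := u.comp (restrCLM hnN) with hu'
    have hH := H N u' (by rw [hfloorN])
    rw [hfloorN] at hH
    simp only [Nat.cast_one, Real.one_rpow] at hH
    -- hH : apxNum 1 u' ≤ lam * 1 * pi2 (dualCLM u')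
    have hnormle : ‖u‖ ≤ ‖u'‖ := by
      apply ContinuousLinearMap.opNorm_le_bound _ (norm_nonneg u')
      intro t
      have e : u t = u' (inclCLM hnN t) := by
        rw [hu', ContinuousLinearMap.comp_apply, restr_incl]
      rw [e]
      calc ‖u' (inclCLM hnN t)‖ ≤ ‖u'‖ * ‖inclCLM hnN t‖ := ContinuousLinearMap.le_opNorm _ _
        _ ≤ ‖u'‖ * ‖t‖ := mul_le_mul_of_nonneg_left (inclCLM_norm_pt hnN t) (norm_nonneg _)
    have hchain : apxNum k u ≤ lam * pi2 (dualCLM u) := by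
      calc apxNum k u ≤ apxNum 1 u := apxNum_anti le_rfl hk u
        _ ≤ ‖u - 0‖ := apxNum_le 1 u 0 (rank_zero_lt le_rfl)
        _ = ‖u‖ := by rw [sub_zero]
        _ ≤ ‖u'‖ := hnormle
        _ ≤ apxNum 1 u' := norm_le_apxNum_one u'
        _ ≤ lam * 1 * pi2 (dualCLM u') := hH
        _ ≤ lam * pi2 (dualCLM u) := by
            rw [mul_one]
            exact mul_le_mul_of_nonneg_left
              (pi2_dual_comp_le u (restrCLM hnN) (restrCLM_norm_pt hnN)) hlam.le
    have hkβle : (k : ℝ) ^ β ≤ (1 / α) ^ β := by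
      apply Real.rpow_le_rpow hkR.le ?_ hβ.le
      have h2 : (n : ℝ) < 1 / α := by
        rw [lt_div_iff₀ hα0]; linarith [mul_comm α (n : ℝ)]
      have h3 : (k : ℝ) ≤ (n : ℝ) := by exact_mod_cast hkn
      linarith
    rw [if_neg (by omega)]
    calc (k : ℝ) ^ β * apxNum k u ≤ (1 / α) ^ β * (lam * pi2 (dualCLM u)) :=
          mul_le_mul hkβle hchain (apxNum_nonneg _ _) (by positivity)
      _ = lam * (1 / α) ^ β * pi2 (dualCLM u) := by ring
      _ ≤ lam * ((2 / α) ^ β + (1 / α) ^ β + 0) * pi2 (dualCLM u) := by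
          apply mul_le_mul_of_nonneg_right ?_ hπ0
          apply mul_le_mul_of_nonneg_left ?_ hlam.le
          have : (0:ℝ) ≤ (2 / α) ^ β := by positivity
          linarith
  -- now 1 ≤ b
  have hb1 : 1 ≤ ⌊α * (n : ℝ)⌋₊ := by omega
  set b := ⌊α * (n : ℝ)⌋₊ with hb
  have hbR : (0:ℝ) < (b : ℝ) := by exact_mod_cast hb1
  have hH := H n u hb1
  by_cases hbk : b ≤ k
  · -- Branch 3 : monotonicity of approximation numbers
    have h2 : apxNum k u ≤ apxNum b u := apxNum_anti hb1 hbk u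
    have hratio : (k : ℝ) / (b : ℝ) ≤ 2 / α := by
      rw [div_le_div_iff₀ hbR hα0]
      have h3 : α * (n : ℝ) < (b : ℝ) + 1 := Nat.lt_floor_add_one _
      have h4 : (1:ℝ) ≤ (b : ℝ) := by exact_mod_cast hb1
      have h5 : (k : ℝ) ≤ (n : ℝ) := by exact_mod_cast hkn
      nlinarith
    have hxle : ((k : ℝ) / (b : ℝ)) ^ β ≤ (2 / α) ^ β :=
      Real.rpow_le_rpow (by positivity) hratio hβ.le
    calc (k : ℝ) ^ β * apxNum k u ≤ (k : ℝ) ^ β * apxNum b u :=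
          mul_le_mul_of_nonneg_left h2 hkβ.le
      _ ≤ (k : ℝ) ^ β * (lam * (b : ℝ) ^ (-β) * pi2 (dualCLM u)) :=
          mul_le_mul_of_nonneg_left hH hkβ.le
      _ = lam * (((k : ℝ) / (b : ℝ)) ^ β) * pi2 (dualCLM u) := by
          rw [Real.rpow_neg hbR.le, Real.div_rpow hkR.le hbR.le]
          ring
      _ ≤ lam * ((2 / α) ^ β) * pi2 (dualCLM u) := by
          apply mul_le_mul_of_nonneg_right ?_ hπ0
          exact mul_le_mul_of_nonneg_left hxle hlam.le
      _ ≤ lam * ((2 / α) ^ β + (1 / α) ^ β +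
            (if k < b then (2 - ((k : ℝ) / (b : ℝ)) ^ β) / (1 - α ^ β) else 0))
            * pi2 (dualCLM u) := by
          apply mul_le_mul_of_nonneg_right ?_ hπ0
          apply mul_le_mul_of_nonneg_left ?_ hlam.le
          rw [if_neg (by omega)]
          have : (0:ℝ) ≤ (1 / α) ^ β := by positivity
          linarith
  · -- Branch 4 : k < b, recursive step via kernel of a good approximant
    push_neg at hbk
    rw [if_pos hbk]
    apply le_of_forall_pos_le_add
    intro ε hε
    set ε' := ε / (k : ℝ) ^ β with hε'def
    have hε' : 0 < ε' := div_pos hε hkβ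
    have hlt : apxNum b u < lam * (b : ℝ) ^ (-β) * pi2 (dualCLM u) + ε' :=
      lt_of_le_of_lt hH (lt_add_of_pos_right _ hε')
    rw [apxNum_def] at hlt
    obtain ⟨c, hcmem, hc⟩ :=
      (csInf_lt_iff (apxSet_bddBelow _ _) (apxSet_nonempty hb1 u)).mp hlt
    obtain ⟨S, hrankS, rfl⟩ := hcmem
    set f := (S : EuclideanSpace ℝ (Fin n) →ₗ[ℝ] X) with hf
    set K := LinearMap.ker f with hKdef
    have hrr : Module.finrank ℝ (LinearMap.range f) < b := by
      have hcast : (Module.finrank ℝ (LinearMap.range f) : Cardinal) = LinearMap.rank f :=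
        Module.finrank_eq_rank ℝ (LinearMap.range f)
      have h2 : (Module.finrank ℝ (LinearMap.range f) : Cardinal) < (b : Cardinal) := by
        rw [hcast]; exact hrankS
      exact_mod_cast h2
    have hRN : Module.finrank ℝ (LinearMap.range f) + Module.finrank ℝ K = n := by
      rw [LinearMap.finrank_range_add_finrank_ker f, finrank_euclideanSpace_fin]
    have hKsum : Module.finrank ℝ K + Module.finrank ℝ Kᗮ = n := by
      rw [Submodule.finrank_add_finrank_orthogonal, finrank_euclideanSpace_fin]
    set m := Module.finrank ℝ Kᗮ with hm
    have hmb : m < b := by omega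
    have hbn : b < n := by
      have h1 : (b : ℝ) ≤ α * n := Nat.floor_le (by positivity)
      have hn0 : (0:ℝ) < (n : ℝ) := lt_of_lt_of_le hkR (by exact_mod_cast hkn)
      have h2 : α * (n : ℝ) < 1 * (n : ℝ) := mul_lt_mul_of_pos_right hα1 hn0
      rw [one_mul] at h2
      exact_mod_cast lt_of_le_of_lt h1 h2
    have hmn : m < n := lt_trans hmb hbn
    set e := (stdOrthonormalBasis ℝ Kᗮ).repr with he
    set PK : EuclideanSpace ℝ (Fin n) →L[ℝ] EuclideanSpace ℝ (Fin n) :=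
      K.subtypeL.comp (K.orthogonalProjection) with hPK
    set J : EuclideanSpace ℝ (Fin m) →L[ℝ] EuclideanSpace ℝ (Fin n) :=
      Kᗮ.subtypeL.comp e.symm.toLinearIsometry.toContinuousLinearMap with hJmap
    set W : EuclideanSpace ℝ (Fin n) →L[ℝ] EuclideanSpace ℝ (Fin m) :=
      e.toLinearIsometry.toContinuousLinearMap.comp (Kᗮ.orthogonalProjection) with hW
    set v := u.comp J with hv
    have hJiso : ∀ x, ‖J x‖ = ‖x‖ := by
      intro x
      calc ‖J x‖ = ‖((e.symm x : Kᗮ) : EuclideanSpace ℝ (Fin n))‖ := rfl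
        _ = ‖(e.symm x : Kᗮ)‖ := rfl
        _ = ‖x‖ := e.symm.norm_map x
    have hdecomp : u = (u.comp PK) + v.comp W := by
      ext t
      have hJW : J (W t) = ((Kᗮ.orthogonalProjection t : Kᗮ) : EuclideanSpace ℝ (Fin n)) := by
        have h1 : W t = e (Kᗮ.orthogonalProjection t) := rfl
        have h2 : ∀ y : Kᗮ, J (e y) = (y : EuclideanSpace ℝ (Fin n)) := by
          intro y
          have : J (e y) = ((e.symm (e y) : Kᗮ) : EuclideanSpace ℝ (Fin n)) := rfl
          rw [this, LinearIsometryEquiv.symm_apply_apply]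
        rw [h1, h2]
      have h3 : u t = u (((K.orthogonalProjection t : K) : EuclideanSpace ℝ (Fin n))
          + ((Kᗮ.orthogonalProjection t : Kᗮ) : EuclideanSpace ℝ (Fin n))) := by
        exact congrArg u (Submodule.starProjection_add_starProjection_orthogonal (K := K) t).symm
      calc u t = u (((K.orthogonalProjection t : K) : EuclideanSpace ℝ (Fin n))
            + ((Kᗮ.orthogonalProjection t : Kᗮ) : EuclideanSpace ℝ (Fin n))) := h3
        _ = u ((K.orthogonalProjection t : K) : EuclideanSpace ℝ (Fin n))
            + u ((Kᗮ.orthogonalProjection t : Kᗮ) : EuclideanSpace ℝ (Fin n)) := map_add u _ _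
        _ = u (PK t) + u (J (W t)) := by rw [hJW]; rfl
        _ = ((u.comp PK) + v.comp W) t := rfl
    have hPKle : ‖u.comp PK‖ ≤ ‖u - S‖ := by
      apply ContinuousLinearMap.opNorm_le_bound _ (norm_nonneg _)
      intro t
      have hmem : PK t ∈ K := SetLike.coe_mem (K.orthogonalProjection t)
      have hS0 : S (PK t) = 0 := LinearMap.mem_ker.mp hmem
      have heq : u (PK t) = (u - S) (PK t) := by
        rw [ContinuousLinearMap.sub_apply, hS0, sub_zero]
      have hPKt : ‖PK t‖ ≤ ‖t‖ := by
        calc ‖PK t‖ = ‖K.orthogonalProjection t‖ := rfl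
          _ ≤ ‖K.orthogonalProjection‖ * ‖t‖ := ContinuousLinearMap.le_opNorm _ _
          _ ≤ 1 * ‖t‖ :=
            mul_le_mul_of_nonneg_right (Submodule.orthogonalProjection_norm_le K) (norm_nonneg _)
          _ = ‖t‖ := one_mul _
      rw [ContinuousLinearMap.comp_apply, heq]
      calc ‖(u - S) (PK t)‖ ≤ ‖u - S‖ * ‖PK t‖ := ContinuousLinearMap.le_opNorm _ _
        _ ≤ ‖u - S‖ * ‖t‖ := mul_le_mul_of_nonneg_left hPKt (norm_nonneg _)
    have hWle : ‖W‖ ≤ 1 := by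
      apply ContinuousLinearMap.opNorm_le_bound _ zero_le_one
      intro t
      have h1 : ‖W t‖ = ‖Kᗮ.orthogonalProjection t‖ := by
        calc ‖W t‖ = ‖e (Kᗮ.orthogonalProjection t)‖ := rfl
          _ = ‖Kᗮ.orthogonalProjection t‖ := e.norm_map _
      rw [h1, one_mul]
      calc ‖Kᗮ.orthogonalProjection t‖ ≤ ‖Kᗮ.orthogonalProjection‖ * ‖t‖ :=
            ContinuousLinearMap.le_opNorm _ _
        _ ≤ 1 * ‖t‖ :=
            mul_le_mul_of_nonneg_right (Submodule.orthogonalProjection_norm_le Kᗮ) (norm_nonneg _)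
        _ = ‖t‖ := one_mul _
    have hapx : apxNum k u ≤ (lam * (b : ℝ) ^ (-β) * pi2 (dualCLM u) + ε') + apxNum k v := by
      calc apxNum k u = apxNum k ((u.comp PK) + v.comp W) := by rw [← hdecomp]
        _ ≤ ‖u.comp PK‖ + apxNum k (v.comp W) := apxNum_add_le hk _ _
        _ ≤ (lam * (b : ℝ) ^ (-β) * pi2 (dualCLM u) + ε') + apxNum k v :=
            add_le_add (le_trans hPKle hc.le) (apxNum_comp_le hk v W hWle)
    have hπv : pi2 (dualCLM v) ≤ pi2 (dualCLM u) :=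
      pi2_dual_comp_le u J (fun x => (hJiso x).le)
    set b' := ⌊α * (m : ℝ)⌋₊ with hb'
    have hIHv := IH m hmn v k hk
    rw [← hb'] at hIHv
    set x := ((k : ℝ) / (b : ℝ)) ^ β with hx
    have hx0 : (0:ℝ) ≤ x := Real.rpow_nonneg (by positivity) β
    have hx1 : x ≤ 1 :=
      Real.rpow_le_one (by positivity)
        (by rw [div_le_one hbR]; exact_mod_cast hbk.le) hβ.le
    have hΦm0 : (0:ℝ) ≤ (2 / α) ^ β + (1 / α) ^ β +
        (if k < b' then (2 - ((k : ℝ) / (b' : ℝ)) ^ β) / (1 - α ^ β) else 0) := by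
      have hite : (0:ℝ) ≤
          (if k < b' then (2 - ((k : ℝ) / (b' : ℝ)) ^ β) / (1 - α ^ β) else 0) := by
        split
        · rename_i hkb'
          have hb'R : (0:ℝ) < (b' : ℝ) := by
            exact_mod_cast lt_of_le_of_lt (Nat.zero_le k) hkb'
          apply div_nonneg ?_ h1y.le
          have h1 : ((k : ℝ) / (b' : ℝ)) ^ β ≤ 1 :=
            Real.rpow_le_one (by positivity)
              (by rw [div_le_one hb'R]; exact_mod_cast hkb'.le) hβ.le
          linarith
        · exact le_rfl
      linarith
    have hxeq : (k : ℝ) ^ β * (b : ℝ) ^ (-β) = x := by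
      rw [hx, Real.div_rpow hkR.le hbR.le, Real.rpow_neg hbR.le, div_eq_mul_inv]
    have hΦm_key : x + ((2 / α) ^ β + (1 / α) ^ β +
        (if k < b' then (2 - ((k : ℝ) / (b' : ℝ)) ^ β) / (1 - α ^ β) else 0))
        ≤ (2 / α) ^ β + (1 / α) ^ β + (2 - x) / (1 - α ^ β) := by
      by_cases hkb' : k < b'
      · rw [if_pos hkb']
        set x' := ((k : ℝ) / (b' : ℝ)) ^ β with hx'
        have hb'R : (0:ℝ) < (b' : ℝ) := by
          exact_mod_cast lt_of_le_of_lt (Nat.zero_le k) hkb'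
        have hb'le : (b' : ℝ) ≤ α * (b : ℝ) := by
          have h1 : (b' : ℝ) ≤ α * (m : ℝ) := Nat.floor_le (by positivity)
          have h2 : (m : ℝ) ≤ (b : ℝ) := by exact_mod_cast hmb.le
          nlinarith
        have hx'ge : x * (1 / α) ^ β ≤ x' := by
          have e1 : x * (1 / α) ^ β = ((k : ℝ) / (α * (b : ℝ))) ^ β := by
            rw [hx, ← Real.mul_rpow (by positivity) (by positivity)]
            congr 1
            rw [div_mul_div_comm, mul_one, mul_comm α (b:ℝ)]
          rw [e1, hx']
          apply Real.rpow_le_rpow (by positivity) ?_ hβ.le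
          rw [div_le_div_iff₀ (by positivity) hb'R]
          nlinarith
        have h2y : 2 - α ^ β ≤ (1 / α) ^ β := by
          have e : (1 / α) ^ β = 1 / (α ^ β) := by
            rw [one_div, Real.inv_rpow hα0.le, one_div]
          rw [e]
          exact arith_two_sub_le hy0 hy1
        have hxx' : x * (2 - α ^ β) ≤ x' :=
          le_trans (mul_le_mul_of_nonneg_left h2y hx0) hx'ge
        exact arith_key1 hy1 h1y hx0 hxx'
      · rw [if_neg hkb']
        exact arith_key2 hy0 h1y hx0 hx1
    have s1 : (k : ℝ) ^ β * apxNum k u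
        ≤ (k : ℝ) ^ β * ((lam * (b : ℝ) ^ (-β) * pi2 (dualCLM u) + ε') + apxNum k v) :=
      mul_le_mul_of_nonneg_left hapx hkβ.le
    have s2 : (k : ℝ) ^ β * ε' = ε := by
      rw [hε'def]; field_simp
    have s3 : (k : ℝ) ^ β * apxNum k v
        ≤ lam * ((2 / α) ^ β + (1 / α) ^ β +
          (if k < b' then (2 - ((k : ℝ) / (b' : ℝ)) ^ β) / (1 - α ^ β) else 0))
          * pi2 (dualCLM u) :=
      le_trans hIHv (mul_le_mul_of_nonneg_left hπv (mul_nonneg hlam.le hΦm0))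
    have s4 : (k : ℝ) ^ β * ((lam * (b : ℝ) ^ (-β) * pi2 (dualCLM u) + ε') + apxNum k v)
        = lam * x * pi2 (dualCLM u) + ε + (k : ℝ) ^ β * apxNum k v := by
      rw [← s2, ← hxeq]; ring
    have s6 : lam * x * pi2 (dualCLM u)
        + lam * ((2 / α) ^ β + (1 / α) ^ β +
          (if k < b' then (2 - ((k : ℝ) / (b' : ℝ)) ^ β) / (1 - α ^ β) else 0))
          * pi2 (dualCLM u)
        ≤ lam * ((2 / α) ^ β + (1 / α) ^ β + (2 - x) / (1 - α ^ β)) * pi2 (dualCLM u) := by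
      have e5 : lam * x * pi2 (dualCLM u)
          + lam * ((2 / α) ^ β + (1 / α) ^ β +
            (if k < b' then (2 - ((k : ℝ) / (b' : ℝ)) ^ β) / (1 - α ^ β) else 0))
            * pi2 (dualCLM u)
          = lam * (x + ((2 / α) ^ β + (1 / α) ^ β +
            (if k < b' then (2 - ((k : ℝ) / (b' : ℝ)) ^ β) / (1 - α ^ β) else 0)))
            * pi2 (dualCLM u) := by ring
      rw [e5]
      exact mul_le_mul_of_nonneg_right (mul_le_mul_of_nonneg_left hΦm_key hlam.le) hπ0
    linarith

theorem stmt_1 (α β : ℝ) (hα0 : 0 < α) (hα1 : α < 1) (hβ : 0 < β) :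
    ∃ C : ℝ, 0 < C ∧
      ∀ (X : Type) [NormedAddCommGroup X] [NormedSpace ℝ X] [CompleteSpace X] (lam : ℝ),
        0 < lam →
        (∀ (n : ℕ) (u : EuclideanSpace ℝ (Fin n) →L[ℝ] X), 1 ≤ ⌊α * (n : ℝ)⌋₊ →
          apxNum ⌊α * (n : ℝ)⌋₊ u ≤ lam * (⌊α * (n : ℝ)⌋₊ : ℝ) ^ (-β) * pi2 (dualCLM u)) →
        ∀ (n : ℕ) (u : EuclideanSpace ℝ (Fin n) →L[ℝ] X) (k : ℕ), 1 ≤ k →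
          (k : ℝ) ^ β * apxNum k u ≤ lam * C * pi2 (dualCLM u) := by
  have hy0 : 0 < α ^ β := Real.rpow_pos_of_pos hα0 β
  have hy1 : α ^ β < 1 := Real.rpow_lt_one hα0.le hα1 hβ
  have h1y : 0 < 1 - α ^ β := by linarith
  refine ⟨((2 / α) ^ β + (1 / α) ^ β) + 2 / (1 - α ^ β), ?_, ?_⟩
  · have h1 : (0:ℝ) < (2 / α) ^ β := Real.rpow_pos_of_pos (by positivity) β
    have h2 : (0:ℝ) < (1 / α) ^ β := Real.rpow_pos_of_pos (by positivity) β
    have h3 : (0:ℝ) < 2 / (1 - α ^ β) := by positivity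
    linarith
  · intro X _ _ _ lam hlam H n u k hk
    have h := key_ind hα0 hα1 hβ hlam H n u k hk
    refine le_trans h ?_
    apply mul_le_mul_of_nonneg_right ?_ (pi2_nonneg _)
    apply mul_le_mul_of_nonneg_left ?_ hlam.le
    have hite : (if k < ⌊α * (n : ℝ)⌋₊ then
        (2 - ((k : ℝ) / (⌊α * (n : ℝ)⌋₊ : ℝ)) ^ β) / (1 - α ^ β) else 0)
        ≤ 2 / (1 - α ^ β) := by
      split
      · rename_i hkb
        apply div_le_div_of_nonneg_right ?_ h1y.le
        have hkR : (0:ℝ) ≤ (k : ℝ) := Nat.cast_nonneg k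
        have hbR : (0:ℝ) < (⌊α * (n : ℝ)⌋₊ : ℝ) := by
          have : 0 < ⌊α * (n : ℝ)⌋₊ := lt_of_le_of_lt (Nat.zero_le k) hkb
          exact_mod_cast this
        have : (0:ℝ) ≤ ((k : ℝ) / (⌊α * (n : ℝ)⌋₊ : ℝ)) ^ β :=
          Real.rpow_nonneg (by positivity) β
        linarith
      · positivity
    linarith

end
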